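/- arXiv:1312.0563 — 2 statements merged into one kernel-verified Lean document; each statement's English description precedes it below -/
import Mathlib

section
/- (Foster–Lyapunov drift bound, main content of the proof of Theorem 1.) Suppose Assumption 1 holds with constants C (a positive integer) and δ > 0, and Assumption 2 holds with constant H > 0. Then there exist a real number z > 1 and real constants c > 0 and d ≥ 0 such that, defining V : Ω → ℝ by V(q) = Σ_{j∈I} z^{(q_j−C)_+}, the generator drift ΔV(q) := Σ_{i∈I} [ f_i(q)·(V(q+e_i) − V(q)) + g_i(q)·(V(q−e_i) − V(q)) ] satisfies ΔV(q) ≤ −c·V(q) + d for every q ∈ Ω. (In the paper's proof one may take any z with 1 < z < 1 + δ/H, c = (z−1)r' with r' = z^{−1}(δ − H(z−1)), and d = (z−1)(H + 2Kr'z).) -/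
/-- Foster–Lyapunov drift bound (main content of the proof of Theorem 1).
The index set `I` is identified with `Fin (2*K)`, the state space is
`Ω = ℕ^I`, `q + e_i` and `q − e_i` are realized by `Function.update` (with
truncated subtraction; the corresponding `g`-term vanishes when `q i = 0`
since `g i q = 0` there), and `(q j − C)₊` by truncated subtraction on `ℕ`.
Under Assumption 1 (negative individual drift) and Assumption 2 (bounded
incoming flow) there are `z > 1`, `c > 0`, `d ≥ 0` such that the generator
drift of `V(q) = ∑ j, z ^ (q j − C)₊` satisfies `ΔV(q) ≤ −c·V(q) + d`. -/
theorem foster_lyapunov_drift_bound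
    (K : ℕ) (hK : 0 < K)
    (f g : Fin (2 * K) → (Fin (2 * K) → ℕ) → ℝ)
    (hf : ∀ i q, 0 ≤ f i q) (hg : ∀ i q, 0 ≤ g i q)
    (hg0 : ∀ i q, q i = 0 → g i q = 0)
    (C : ℕ) (hC : 0 < C) (δ : ℝ) (hδ : 0 < δ)
    (assump1 : ∀ i (q : Fin (2 * K) → ℕ), C < q i → f i q - g i q < -δ)
    (H : ℝ) (hH : 0 < H)
    (assump2 : ∀ q : Fin (2 * K) → ℕ, ∑ i, f i q ≤ H) :
    ∃ z : ℝ, 1 < z ∧ ∃ c : ℝ, 0 < c ∧ ∃ d : ℝ, 0 ≤ d ∧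
      ∀ q : Fin (2 * K) → ℕ,
        ∑ i, (f i q * ((∑ j, z ^ (Function.update q i (q i + 1) j - C))
                        - ∑ j, z ^ (q j - C))
            + g i q * ((∑ j, z ^ (Function.update q i (q i - 1) j - C))
                        - ∑ j, z ^ (q j - C)))
          ≤ -c * (∑ j, z ^ (q j - C)) + d := by
  have hH2 : (0:ℝ) < 2 * H := by linarith
  set a : ℝ := δ / (2 * H) with ha
  have ha0 : 0 < a := div_pos hδ hH2
  have hHa : H * a = δ / 2 := by rw [ha]; field_simp
  refine ⟨1 + a, by linarith, ?_⟩
  set z : ℝ := 1 + a with hzdef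
  have hz1 : 1 < z := by rw [hzdef]; linarith
  have hz0 : (0:ℝ) < z := by linarith
  set r : ℝ := δ / (2 * z) with hr
  have hr0 : 0 < r := div_pos hδ (by linarith)
  have hrz : r * z = δ / 2 := by
    rw [hr]; field_simp
  refine ⟨a * r, by positivity, a * (H + 2 * K * r), by positivity, ?_⟩
  intro q
  have key : ∀ (i : Fin (2 * K)) (m : ℕ),
      (∑ j, z ^ (Function.update q i m j - C)) - (∑ j, z ^ (q j - C))
        = z ^ (m - C) - z ^ (q i - C) := by
    intro i m
    rw [← Finset.sum_sub_distrib, Finset.sum_eq_single i]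
    · rw [Function.update_self]
    · intro j _ hj
      rw [Function.update_of_ne hj]; ring
    · intro h; exact absurd (Finset.mem_univ i) h
  have hterm : ∀ i : Fin (2 * K),
      f i q * ((∑ j, z ^ (Function.update q i (q i + 1) j - C))
                - ∑ j, z ^ (q j - C))
        + g i q * ((∑ j, z ^ (Function.update q i (q i - 1) j - C))
                - ∑ j, z ^ (q j - C))
      ≤ -(a * r) * z ^ (q i - C) + a * (f i q + r) := by
    intro i
    rw [key i (q i + 1), key i (q i - 1)]
    have hfH : f i q ≤ H :=
      le_trans (Finset.single_le_sum (fun j _ => hf j q) (Finset.mem_univ i)) (assump2 q)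
    rcases lt_or_ge C (q i) with h | h
    · -- q i > C
      obtain ⟨k, hk⟩ : ∃ k, q i - C = k + 1 := ⟨q i - C - 1, by omega⟩
      have h1 : q i + 1 - C = k + 2 := by omega
      have h2 : q i - 1 - C = k := by omega
      rw [hk, h1, h2]
      have hfg : f i q - g i q < -δ := assump1 i q h
      have hb : f i q * z - g i q ≤ -(r * z) := by
        have hfa : f i q * a ≤ H * a := mul_le_mul_of_nonneg_right hfH ha0.le
        rw [hrz]
        have : f i q * z - g i q = (f i q - g i q) + f i q * a := by
          rw [hzdef]; ring
        rw [this]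
        linarith [hHa]
      have hzk : (0:ℝ) < z ^ k := pow_pos hz0 k
      have e1 : z ^ (k + 1) = z ^ k * z := pow_succ z k
      have e2 : z ^ (k + 2) = z ^ k * z * z := by
        rw [show k + 2 = (k + 1) + 1 from rfl, pow_succ, pow_succ]
      rw [e1, e2]
      have hmain : z ^ k * a * (f i q * z - g i q) ≤ z ^ k * a * (-(r * z)) :=
        mul_le_mul_of_nonneg_left hb (mul_nonneg (pow_nonneg hz0.le k) ha0.le)
      have hnn : 0 ≤ a * (f i q + r) := mul_nonneg ha0.le (add_nonneg (hf i q) hr0.le)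
      have heq : f i q * (z ^ k * z * z - z ^ k * z) + g i q * (z ^ k - z ^ k * z)
          = z ^ k * (z - 1) * (f i q * z - g i q) := by ring
      have hza : z - 1 = a := by rw [hzdef]; ring
      rw [heq, hza]
      have : z ^ k * a * (-(r * z)) = -(a * r) * (z ^ k * z) := by ring
      calc z ^ k * a * (f i q * z - g i q) ≤ z ^ k * a * (-(r * z)) := hmain
        _ = -(a * r) * (z ^ k * z) := by ring
        _ ≤ -(a * r) * (z ^ k * z) + a * (f i q + r) := by linarith
    · -- q i ≤ C
      have h0 : q i - C = 0 := by omega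
      have h1 : q i - 1 - C = 0 := by omega
      rw [h0, h1, pow_zero]
      have he : q i + 1 - C ≤ 1 := by omega
      have hle : z ^ (q i + 1 - C) ≤ z := by
        calc z ^ (q i + 1 - C) ≤ z ^ 1 := pow_le_pow_right₀ hz1.le he
          _ = z := pow_one z
      have hfz : f i q * (z ^ (q i + 1 - C) - 1) ≤ f i q * a := by
        apply mul_le_mul_of_nonneg_left _ (hf i q)
        rw [hzdef] at hle ⊢; linarith
      have : -(a * r) * 1 + a * (f i q + r) = f i q * a := by ring
      rw [this]
      have : g i q * (1 - 1) = 0 := by ring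
      linarith [hfz]
  calc ∑ i, (f i q * ((∑ j, z ^ (Function.update q i (q i + 1) j - C))
                - ∑ j, z ^ (q j - C))
            + g i q * ((∑ j, z ^ (Function.update q i (q i - 1) j - C))
                - ∑ j, z ^ (q j - C)))
      ≤ ∑ i, (-(a * r) * z ^ (q i - C) + a * (f i q + r)) :=
        Finset.sum_le_sum (fun i _ => hterm i)
    _ = -(a * r) * (∑ j, z ^ (q j - C)) + (a * (∑ i, f i q) + (2 * K : ℕ) * (a * r)) := by
        rw [Finset.sum_add_distrib, ← Finset.mul_sum]
        congr 1
        rw [← Finset.mul_sum, Finset.sum_add_distrib, Finset.sum_const,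
          Finset.card_univ, Fintype.card_fin, nsmul_eq_mul]
        push_cast
        ring
    _ ≤ -(a * r) * (∑ j, z ^ (q j - C)) + a * (H + 2 * K * r) := by
        have hsf : a * (∑ i, f i q) ≤ a * H := mul_le_mul_of_nonneg_left (assump2 q) ha0.le
        have : ((2 * K : ℕ) : ℝ) * (a * r) = a * (2 * K * r) := by push_cast; ring
        rw [this]
        linarith
end

section
/- (Foster criterion form of Theorem 1.) Suppose Assumption 1 holds with constants C (a positive integer) and δ > 0, and Assumption 2 holds with constant H > 0. Then there exists a real number z > 1 such that, defining V : Ω → ℝ by V(q) = Σ_{j∈I} z^{(q_j−C)_+} and the generator drift ΔV(q) := Σ_{i∈I} [ f_i(q)·(V(q+e_i) − V(q)) + g_i(q)·(V(q−e_i) − V(q)) ], the set { q ∈ Ω : ΔV(q) > −1 } is finite; that is, ΔV(q) ≤ −1 for all q outside a finite subset of Ω. -/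
private lemma sum_update_sub (z : ℝ) {n : ℕ} (q : Fin n → ℕ) (i : Fin n) (a C : ℕ) :
    (∑ j, z ^ (Function.update q i a j - C)) - ∑ j, z ^ (q j - C)
      = z ^ (a - C) - z ^ (q i - C) := by
  rw [← Finset.sum_sub_distrib, Finset.sum_eq_single i]
  · simp
  · intro j _ hj
    rw [Function.update_of_ne hj, sub_self]
  · simp

/-- Foster criterion form of Theorem 1. Under Assumption 1 (negative
individual drift) and Assumption 2 (bounded incoming flow), there is `z > 1`
such that the generator drift `ΔV` of `V(q) = ∑ j, z ^ (q j − C)₊` satisfies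
`ΔV(q) ≤ −1` outside a finite subset of `Ω = ℕ^I`, i.e. the set
`{q | ΔV(q) > −1}` is finite. The index set `I` is identified with
`Fin (2*K)`; `q ± e_i` is realized by `Function.update` (with truncated
subtraction, the `g`-term vanishing when `q i = 0` since `g i q = 0` there). -/
theorem foster_criterion_form
    (K : ℕ) (hK : 0 < K)
    (f g : Fin (2 * K) → (Fin (2 * K) → ℕ) → ℝ)
    (hf : ∀ i q, 0 ≤ f i q) (hg : ∀ i q, 0 ≤ g i q)
    (hg0 : ∀ i q, q i = 0 → g i q = 0)
    (C : ℕ) (hC : 0 < C) (δ : ℝ) (hδ : 0 < δ)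
    (assump1 : ∀ i (q : Fin (2 * K) → ℕ), C < q i → f i q - g i q < -δ)
    (H : ℝ) (hH : 0 < H)
    (assump2 : ∀ q : Fin (2 * K) → ℕ, ∑ i, f i q ≤ H) :
    ∃ z : ℝ, 1 < z ∧
      {q : Fin (2 * K) → ℕ |
        -1 < ∑ i, (f i q * ((∑ j, z ^ (Function.update q i (q i + 1) j - C))
                              - ∑ j, z ^ (q j - C))
                 + g i q * ((∑ j, z ^ (Function.update q i (q i - 1) j - C))
                              - ∑ j, z ^ (q j - C)))}.Finite := by
  set z : ℝ := 1 + δ / (2 * H) with hzdef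
  have hz1 : 1 < z := by
    have : 0 < δ / (2 * H) := div_pos hδ (by linarith)
    simp only [hzdef]; linarith
  have hz0 : 0 < z - 1 := by linarith
  have hzpos : (0:ℝ) < z := by linarith
  have hzH : (z - 1) * H = δ / 2 := by
    have : z - 1 = δ / (2 * H) := by simp [hzdef]
    rw [this]; field_simp
  obtain ⟨n, hn⟩ := pow_unbounded_of_one_lt ((δ/2 + 1)/((δ/2)*(z-1))) hz1
  have hden : (0:ℝ) < (δ/2)*(z-1) := by positivity
  have hn' : δ/2 + 1 ≤ (δ/2)*(z-1) * z ^ n := by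
    rw [div_lt_iff₀ hden] at hn
    nlinarith
  refine ⟨z, hz1, ?_⟩
  set N := C + n with hN
  apply Set.Finite.subset (Set.Finite.pi (fun i : Fin (2*K) => Set.finite_Iic N))
  intro q hq
  simp only [Set.mem_setOf_eq] at hq
  by_contra hmem
  obtain ⟨i0, hi0⟩ : ∃ i0, N < q i0 := by
    by_contra h'
    push_neg at h'
    exact hmem (fun i _ => h' i)
  -- rewrite the drift
  have hrw : ∀ i : Fin (2*K),
      (f i q * ((∑ j, z ^ (Function.update q i (q i + 1) j - C))
                              - ∑ j, z ^ (q j - C))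
       + g i q * ((∑ j, z ^ (Function.update q i (q i - 1) j - C))
                              - ∑ j, z ^ (q j - C)))
      = f i q * (z ^ (q i + 1 - C) - z ^ (q i - C))
        + g i q * (z ^ (q i - 1 - C) - z ^ (q i - C)) := by
    intro i
    rw [sum_update_sub z q i (q i + 1) C, sum_update_sub z q i (q i - 1) C]
  rw [Finset.sum_congr rfl (fun i _ => hrw i)] at hq
  have hfH : ∀ i, f i q ≤ H := fun i =>
    le_trans (Finset.single_le_sum (fun j _ => hf j q) (Finset.mem_univ i)) (assump2 q)
  -- pointwise negative bound in the supercritical regime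
  have hneg : ∀ i, C < q i → z * f i q - g i q ≤ -(δ/2) := by
    intro i h
    have h1 := assump1 i q h
    have h2 := hfH i
    nlinarith
  have hkey : ∀ i, C < q i →
      f i q * (z ^ (q i + 1 - C) - z ^ (q i - C))
        + g i q * (z ^ (q i - 1 - C) - z ^ (q i - C))
      ≤ -((δ/2)*(z-1) * z ^ (q i - 1 - C)) := by
    intro i h
    set m := q i - 1 - C with hm
    have e1 : q i + 1 - C = m + 2 := by omega
    have e2 : q i - C = m + 1 := by omega
    rw [e1, e2]
    have heq : f i q * (z ^ (m+2) - z ^ (m+1)) + g i q * (z ^ m - z ^ (m+1))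
        = (z - 1) * z ^ m * (z * f i q - g i q) := by ring
    rw [heq]
    have hzm : (0:ℝ) < z ^ m := pow_pos hzpos m
    have h5 := hneg i h
    have h4 := mul_le_mul_of_nonneg_left h5 (mul_nonneg hz0.le hzm.le)
    nlinarith [h4]
  -- every term is at most (z-1) * f i q
  have hle : ∀ i : Fin (2*K),
      f i q * (z ^ (q i + 1 - C) - z ^ (q i - C))
        + g i q * (z ^ (q i - 1 - C) - z ^ (q i - C))
      ≤ (z - 1) * f i q := by
    intro i
    rcases lt_trichotomy (q i) C with h | h | h
    · have e1 : q i + 1 - C = 0 := by omega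
      have e2 : q i - C = 0 := by omega
      have e3 : q i - 1 - C = 0 := by omega
      rw [e1, e2, e3]
      simp only [pow_zero, sub_self, mul_zero, add_zero]
      exact mul_nonneg hz0.le (hf i q)
    · have e1 : q i + 1 - C = 1 := by omega
      have e2 : q i - C = 0 := by omega
      have e3 : q i - 1 - C = 0 := by omega
      rw [e1, e2, e3]
      simp only [pow_zero, pow_one, sub_self, mul_zero, add_zero]
      linarith [hf i q]
    · have h1 := hkey i h
      have hzm : (0:ℝ) < z ^ (q i - 1 - C) := pow_pos hzpos _
      have h2 : (0:ℝ) ≤ (z - 1) * f i q := mul_nonneg hz0.le (hf i q)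
      nlinarith
  -- split off the big coordinate
  have hsplit := Finset.add_sum_erase Finset.univ
    (fun i => f i q * (z ^ (q i + 1 - C) - z ^ (q i - C))
        + g i q * (z ^ (q i - 1 - C) - z ^ (q i - C))) (Finset.mem_univ i0)
  rw [← hsplit] at hq
  beta_reduce at hq
  have hrest : (∑ i ∈ Finset.univ.erase i0,
      (f i q * (z ^ (q i + 1 - C) - z ^ (q i - C))
        + g i q * (z ^ (q i - 1 - C) - z ^ (q i - C)))) ≤ (z - 1) * H := by
    calc (∑ i ∈ Finset.univ.erase i0,
        (f i q * (z ^ (q i + 1 - C) - z ^ (q i - C))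
          + g i q * (z ^ (q i - 1 - C) - z ^ (q i - C))))
        ≤ ∑ i ∈ Finset.univ.erase i0, (z - 1) * f i q :=
          Finset.sum_le_sum (fun i _ => hle i)
      _ = (z - 1) * ∑ i ∈ Finset.univ.erase i0, f i q := by
          rw [Finset.mul_sum]
      _ ≤ (z - 1) * ∑ i, f i q := by
          apply mul_le_mul_of_nonneg_left _ hz0.le
          exact Finset.sum_le_sum_of_subset_of_nonneg (Finset.subset_univ _)
            (fun j _ _ => hf j q)
      _ ≤ (z - 1) * H := mul_le_mul_of_nonneg_left (assump2 q) hz0.le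
  have hCi0 : C < q i0 := by omega
  have hbig := hkey i0 hCi0
  have hpow : z ^ n ≤ z ^ (q i0 - 1 - C) := by
    apply pow_le_pow_right₀ hz1.le
    omega
  have hbig2 : f i0 q * (z ^ (q i0 + 1 - C) - z ^ (q i0 - C))
        + g i0 q * (z ^ (q i0 - 1 - C) - z ^ (q i0 - C))
      ≤ -(δ/2 + 1) := by
    have h3 : (δ/2)*(z-1) * z ^ n ≤ (δ/2)*(z-1) * z ^ (q i0 - 1 - C) :=
      mul_le_mul_of_nonneg_left hpow hden.le
    linarith
  rw [hzH] at hrest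
  linarith
end
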